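/- arXiv:1812.03665 — 3 statements merged into one kernel-verified Lean document; each statement's English description precedes it below -/
import Mathlib

section
/- Let N = M = [-1,1] × B̄ ⊆ ℝ × ℝ^{n₂}, where B̄ is the closed unit ball in ℝ^{n₂}. Let f : N → ℝ × ℝ^{n₂} be continuous and write π₁, π₂ for the projections to the factors. Suppose π₂ f(N) ⊆ int B̄, π₁ f(z) < -1 for all z ∈ {-1} × B̄, and π₁ f(z) > 1 for all z ∈ {1} × B̄. Then the homotopy χ(λ, z₁, z₂) = (1-λ)·f(z₁, z₂) + λ·(2z₁, 0) satisfies: χ₀ = f; χ([0,1], N⁻) ∩ M = ∅ where N⁻ = {-1,1} × B̄; χ([0,1], N) ∩ M⁺ = ∅ where M⁺ = [-1,1] × ∂B̄; χ₁(z₁, z₂) = (2z₁, 0); and the linear map A(z₁) = 2z₁ maps ∂[-1,1] = {-1,1} into ℝ \ [-1,1]. Consequently N is correctly aligned with M under f. -/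
open Set Metric

/-- Correct alignment (Definition 3.2 / def:covering) of the window
`N = [-1,1] × B̄` with itself (here `M = N`), for a one-dimensional unstable
direction: there is a homotopy `χ` from `f` to a linear expanding map `(z₁,z₂) ↦ (A z₁, 0)`,
never sending the exit set `N⁻ = {-1,1} × B̄` into `M` and never sending `N` into the
entry set `M⁺ = [-1,1] × ∂B̄`. -/
def CorrectlyAlignedSelf (n₂ : ℕ)
    (f : ℝ × EuclideanSpace ℝ (Fin n₂) → ℝ × EuclideanSpace ℝ (Fin n₂)) : Prop :=
  let N : Set (ℝ × EuclideanSpace ℝ (Fin n₂)) :=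
    Set.Icc (-1 : ℝ) 1 ×ˢ closedBall (0 : EuclideanSpace ℝ (Fin n₂)) 1
  ∃ χ : ℝ → ℝ × EuclideanSpace ℝ (Fin n₂) → ℝ × EuclideanSpace ℝ (Fin n₂),
    ContinuousOn (fun p : ℝ × (ℝ × EuclideanSpace ℝ (Fin n₂)) => χ p.1 p.2)
      (Set.Icc (0:ℝ) 1 ×ˢ N) ∧
    (∀ z ∈ N, χ 0 z = f z) ∧
    (∀ l ∈ Set.Icc (0:ℝ) 1, ∀ z ∈ N, (z.1 = -1 ∨ z.1 = 1) → χ l z ∉ N) ∧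
    (∀ l ∈ Set.Icc (0:ℝ) 1, ∀ z ∈ N,
      χ l z ∉ Set.Icc (-1 : ℝ) 1 ×ˢ sphere (0 : EuclideanSpace ℝ (Fin n₂)) 1) ∧
    ∃ A : ℝ →ₗ[ℝ] ℝ,
      (∀ z ∈ N, χ 1 z = (A z.1, 0)) ∧
      (∀ t : ℝ, (t = -1 ∨ t = 1) → A t ∉ Set.Icc (-1 : ℝ) 1)

/-- Lemma 5.1 (lem:covering): verification of correct alignment of
`N = M = [-1,1] × B̄` under `f`, via the explicit homotopy
`χ(λ,z₁,z₂) = (1-λ)·f(z₁,z₂) + λ·(2z₁,0)`. -/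
theorem stmt_2 (n₂ : ℕ)
    (f : ℝ × EuclideanSpace ℝ (Fin n₂) → ℝ × EuclideanSpace ℝ (Fin n₂))
    (N : Set (ℝ × EuclideanSpace ℝ (Fin n₂)))
    (hN : N = Set.Icc (-1 : ℝ) 1 ×ˢ closedBall (0 : EuclideanSpace ℝ (Fin n₂)) 1)
    (hf : ContinuousOn f N)
    (h2 : ∀ z ∈ N, (f z).2 ∈ ball (0 : EuclideanSpace ℝ (Fin n₂)) 1)
    (hminus : ∀ z ∈ N, z.1 = -1 → (f z).1 < -1)
    (hplus : ∀ z ∈ N, z.1 = 1 → 1 < (f z).1)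
    (χ : ℝ → ℝ × EuclideanSpace ℝ (Fin n₂) → ℝ × EuclideanSpace ℝ (Fin n₂))
    (hχ : ∀ l z, χ l z = ((1 - l) * (f z).1 + l * (2 * z.1), (1 - l) • (f z).2)) :
    (∀ z, χ 0 z = f z) ∧
    (∀ l ∈ Set.Icc (0:ℝ) 1, ∀ z ∈ N, (z.1 = -1 ∨ z.1 = 1) → χ l z ∉ N) ∧
    (∀ l ∈ Set.Icc (0:ℝ) 1, ∀ z ∈ N,
      χ l z ∉ Set.Icc (-1 : ℝ) 1 ×ˢ sphere (0 : EuclideanSpace ℝ (Fin n₂)) 1) ∧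
    (∀ z, χ 1 z = (2 * z.1, 0)) ∧
    (∀ t : ℝ, (t = -1 ∨ t = 1) → (2 * t) ∉ Set.Icc (-1 : ℝ) 1) ∧
    CorrectlyAlignedSelf n₂ f := by
  subst hN
  have key1 : ∀ z, χ 0 z = f z := by
    intro z; rw [hχ]; simp
  have key4 : ∀ z, χ 1 z = (2 * z.1, (0 : EuclideanSpace ℝ (Fin n₂))) := by
    intro z; rw [hχ]; simp
  have key2 : ∀ l ∈ Set.Icc (0:ℝ) 1, ∀ z ∈ Set.Icc (-1 : ℝ) 1 ×ˢ
      closedBall (0 : EuclideanSpace ℝ (Fin n₂)) 1, (z.1 = -1 ∨ z.1 = 1) →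
      χ l z ∉ Set.Icc (-1 : ℝ) 1 ×ˢ closedBall (0 : EuclideanSpace ℝ (Fin n₂)) 1 := by
    intro l hl z hz hz1 hmem
    have h1 := hmem.1
    rw [hχ] at h1
    simp only [Set.mem_Icc] at h1
    obtain ⟨hl0, hl1⟩ := hl
    rcases hz1 with h | h
    · have ha := hminus z hz h
      rw [h] at h1
      rcases eq_or_lt_of_le hl0 with rfl | hl0'
      · simp at h1; linarith [h1.1]
      · nlinarith [h1.1, mul_nonpos_of_nonneg_of_nonpos
          (show (0:ℝ) ≤ 1 - l by linarith) (show (f z).1 + 1 ≤ 0 by linarith)]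
    · have ha := hplus z hz h
      rw [h] at h1
      rcases eq_or_lt_of_le hl0 with rfl | hl0'
      · simp at h1; linarith [h1.2]
      · nlinarith [h1.2, mul_nonneg (show (0:ℝ) ≤ 1 - l by linarith)
          (show (0:ℝ) ≤ (f z).1 - 1 by linarith)]
  have key3 : ∀ l ∈ Set.Icc (0:ℝ) 1, ∀ z ∈ Set.Icc (-1 : ℝ) 1 ×ˢ
      closedBall (0 : EuclideanSpace ℝ (Fin n₂)) 1,
      χ l z ∉ Set.Icc (-1 : ℝ) 1 ×ˢ sphere (0 : EuclideanSpace ℝ (Fin n₂)) 1 := by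
    intro l hl z hz hmem
    have h2' := h2 z hz
    have hnorm : ‖(f z).2‖ < 1 := by
      simpa [mem_ball, dist_eq_norm] using h2'
    have hm := hmem.2
    rw [hχ] at hm
    simp only [mem_sphere, dist_eq_norm, sub_zero] at hm
    have : ‖(1 - l) • (f z).2‖ < 1 := by
      rw [norm_smul]
      calc ‖(1 - l : ℝ)‖ * ‖(f z).2‖ ≤ 1 * ‖(f z).2‖ := by
            apply mul_le_mul_of_nonneg_right _ (norm_nonneg _)
            rw [Real.norm_eq_abs, abs_le]; constructor <;> linarith [hl.1, hl.2]
        _ < 1 := by simpa using hnorm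
    rw [hm] at this
    exact lt_irrefl _ this
  have key5 : ∀ t : ℝ, (t = -1 ∨ t = 1) → (2 * t) ∉ Set.Icc (-1 : ℝ) 1 := by
    rintro t (rfl | rfl) ht <;> simp [Set.mem_Icc] at ht
  refine ⟨key1, key2, key3, key4, key5, ?_⟩
  refine ⟨χ, ?_, fun z _ => key1 z, key2, key3, (2 : ℝ) • LinearMap.id, ?_, ?_⟩
  · have : ContinuousOn (fun p : ℝ × (ℝ × EuclideanSpace ℝ (Fin n₂)) => f p.2)
        (Set.Icc (0:ℝ) 1 ×ˢ (Set.Icc (-1 : ℝ) 1 ×ˢ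
          closedBall (0 : EuclideanSpace ℝ (Fin n₂)) 1)) :=
      hf.comp continuous_snd.continuousOn (fun p hp => hp.2)
    have hcont : ContinuousOn
        (fun p : ℝ × (ℝ × EuclideanSpace ℝ (Fin n₂)) =>
          (((1 - p.1) * (f p.2).1 + p.1 * (2 * p.2.1),
            (1 - p.1) • (f p.2).2) : ℝ × EuclideanSpace ℝ (Fin n₂)))
        (Set.Icc (0:ℝ) 1 ×ˢ (Set.Icc (-1 : ℝ) 1 ×ˢ
          closedBall (0 : EuclideanSpace ℝ (Fin n₂)) 1)) := by
      apply ContinuousOn.prodMk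
      · exact (((continuousOn_const.sub continuous_fst.continuousOn).mul
          (this.fst)).add (continuous_fst.continuousOn.mul
          (continuousOn_const.mul continuous_snd.fst.continuousOn)))
      · exact (continuousOn_const.sub continuous_fst.continuousOn).smul this.snd
    convert hcont using 2 with p
    rw [hχ]
  · intro z _; rw [key4]; simp [smul_eq_mul]
  · intro t ht; simpa [smul_eq_mul] using key5 t ht
end

section
/- Let V be a Borel subset of ℝⁿ, and for y ∈ ℝ^{n−1} let L_y = {(x, y) : x ∈ ℝ} ⊆ ℝⁿ. If n − 1 ≤ s ≤ n, then ∫_{ℝ^{n−1}} H^{s−(n−1)}(V ∩ L_y) dy ≤ H^s(V), where H^t denotes t-dimensional Hausdorff (outer) measure. In particular, if H^{s−(n−1)}(V ∩ L_y) > 0 on a set of y of positive Lebesgue measure, then dim_H(V) ≥ s. -/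
open MeasureTheory

open scoped ENNReal NNReal

/-- A set `T ⊆ ℝ × ℝᵐ` of extended diameter `d ≠ ∞` projects (in the second factor)
into a measurable box of volume at most `d ^ m`; moreover the box is empty if `T` is. -/
lemma aux_box {m : ℕ} (T : Set (ℝ × (Fin m → ℝ))) (hT : EMetric.diam T ≠ ⊤) :
    ∃ B : Set (Fin m → ℝ), MeasurableSet B ∧
      volume B ≤ EMetric.diam T ^ (m : ℕ) ∧
      (∀ x y, (x, y) ∈ T → y ∈ B) ∧ (¬ T.Nonempty → B = ∅) := by
  by_cases hne : T.Nonempty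
  · set dR : ℝ := (EMetric.diam T).toReal with hdR
    have hdR0 : 0 ≤ dR := ENNReal.toReal_nonneg
    have hbdd : Bornology.IsBounded T := Metric.isBounded_iff_ediam_ne_top.mpr hT
    set c : Fin m → ℝ := fun i =>
      sInf ((fun p : ℝ × (Fin m → ℝ) => p.2 i) '' T) with hc
    refine ⟨Set.univ.pi fun i => Set.Icc (c i) (c i + dR), ?_, ?_, ?_, fun h => absurd hne h⟩
    · exact MeasurableSet.univ_pi fun i => measurableSet_Icc
    · rw [volume_pi_pi]
      have : ∀ i : Fin m, volume (Set.Icc (c i) (c i + dR)) = ENNReal.ofReal dR := by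
        intro i; rw [Real.volume_Icc]; ring_nf
      rw [Finset.prod_congr rfl fun i _ => this i, Finset.prod_const,
        Finset.card_univ, Fintype.card_fin]
      exact pow_le_pow_left' (ENNReal.ofReal_toReal_le) m
    · intro x y hxy i _
      have hdist : ∀ z ∈ (fun p : ℝ × (Fin m → ℝ) => p.2 i) '' T, |z - y i| ≤ dR := by
        rintro z ⟨q, hq, rfl⟩
        have h1 : dist (q.2 i) (y i) ≤ dist q.2 y := dist_le_pi_dist q.2 y i
        have h2 : dist q.2 y ≤ dist q (x, y) := by
          rw [Prod.dist_eq]; exact le_max_right _ _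
        have h3 : dist q (x, y) ≤ Metric.diam T := Metric.dist_le_diam_of_mem hbdd hq hxy
        have := (h1.trans h2).trans h3
        rwa [Real.dist_eq, Metric.diam] at this
      have hmemS : y i ∈ (fun p : ℝ × (Fin m → ℝ) => p.2 i) '' T := ⟨(x, y), hxy, rfl⟩
      have hbb : BddBelow ((fun p : ℝ × (Fin m → ℝ) => p.2 i) '' T) := by
        refine ⟨y i - dR, fun z hz => ?_⟩
        have := abs_le.1 (hdist z hz); linarith [this.1]
      constructor
      · exact csInf_le hbb hmemS
      · have h1 : y i - dR ≤ c i := by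
          refine le_csInf ⟨y i, hmemS⟩ fun z hz => ?_
          have := abs_le.1 (hdist z hz); linarith [this.1]
        linarith
  · exact ⟨∅, MeasurableSet.empty, by simp, fun x y hxy => absurd ⟨(x, y), hxy⟩ hne,
      fun _ => rfl⟩

/-- The diameter of a horizontal slice is at most the diameter of the set. -/
lemma aux_slice_diam {m : ℕ} (T : Set (ℝ × (Fin m → ℝ))) (y : Fin m → ℝ) :
    EMetric.diam {x : ℝ | (x, y) ∈ T} ≤ EMetric.diam T := by
  refine EMetric.diam_le fun x hx x' hx' => ?_
  have h1 : edist x x' ≤ edist (x, y) (x', y) := by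
    rw [Prod.edist_eq]; exact le_max_left _ _
  exact h1.trans (EMetric.edist_le_diam_of_mem hx hx')

/-- Key approximation lemma: there is a measurable majorant `g` of the slice
Hausdorff measures whose integral is at most `μH[s] V + ε`. -/
lemma aux_key {m : ℕ} {s : ℝ} (hs1 : (m : ℝ) ≤ s)
    (V : Set (ℝ × (Fin m → ℝ))) (ε : ℝ≥0∞) (hε : ε ≠ 0) (hfin : μH[s] V ≠ ⊤) :
    ∃ g : (Fin m → ℝ) → ℝ≥0∞, Measurable g ∧
      (∀ y, μH[s - m] {x : ℝ | (x, y) ∈ V} ≤ g y) ∧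
      ∫⁻ y, g y ≤ μH[s] V + ε := by
  classical
  set δ : ℕ → ℝ≥0∞ := fun k => ((k : ℝ≥0∞) + 1)⁻¹ with hδ
  have hδpos : ∀ k, 0 < δ k := fun k =>
    ENNReal.inv_pos.mpr (by simp)
  have hδtop : ∀ k, δ k ≠ ⊤ := fun k =>
    ENNReal.inv_ne_top.mpr (by simp)
  have hδanti : ∀ j k : ℕ, j ≤ k → δ k ≤ δ j := by
    intro j k hjk
    exact ENNReal.inv_le_inv.mpr (add_le_add_left (by exact_mod_cast hjk) 1)
  -- choose good covers at each scale
  have hex : ∀ k : ℕ, ∃ t : ℕ → Set (ℝ × (Fin m → ℝ)),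
      (V ⊆ ⋃ n, t n) ∧ (∀ n, EMetric.diam (t n) ≤ δ k) ∧
      ∑' n, ⨆ _ : (t n).Nonempty, EMetric.diam (t n) ^ s ≤ μH[s] V + ε := by
    intro k
    have h1 : (⨅ (t : ℕ → Set (ℝ × (Fin m → ℝ))) (_ : V ⊆ ⋃ n, t n)
        (_ : ∀ n, EMetric.diam (t n) ≤ δ k),
        ∑' n, ⨆ _ : (t n).Nonempty, EMetric.diam (t n) ^ s) ≤ μH[s] V := by
      rw [MeasureTheory.Measure.hausdorffMeasure_apply]
      exact le_iSup₂_of_le (δ k) (hδpos k) le_rfl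
    have h2 := h1.trans_lt (ENNReal.lt_add_right hfin hε)
    rw [iInf_lt_iff] at h2
    obtain ⟨t, h2⟩ := h2
    rw [iInf_lt_iff] at h2
    obtain ⟨hcov, h2⟩ := h2
    rw [iInf_lt_iff] at h2
    obtain ⟨hdiam, h2⟩ := h2
    exact ⟨t, hcov, hdiam, h2.le⟩
  choose t htcov htdiam htsum using hex
  have htfin : ∀ k n, EMetric.diam (t k n) ≠ ⊤ := fun k n =>
    ((htdiam k n).trans_lt (lt_top_iff_ne_top.mpr (hδtop k))).ne
  choose B hBmeas hBvol hBmem hBempty using fun k n => aux_box (t k n) (htfin k n)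
  set f : ℕ → (Fin m → ℝ) → ℝ≥0∞ := fun k y =>
    ∑' n, EMetric.diam (t k n) ^ (s - m) * (B k n).indicator 1 y with hf
  have hfmeas : ∀ k, Measurable (f k) := by
    intro k
    exact Measurable.ennreal_tsum fun n =>
      (measurable_const.indicator (hBmeas k n)).const_mul _
  refine ⟨fun y => Filter.liminf (fun k => f k y) Filter.atTop,
    Measurable.liminf hfmeas, ?_, ?_⟩
  · -- pointwise bound on the slice measure
    intro y
    rw [MeasureTheory.Measure.hausdorffMeasure_apply]
    refine iSup₂_le fun r hr => ?_
    obtain ⟨j, hj⟩ : ∃ j : ℕ, δ j ≤ r := by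
      obtain ⟨n, hn⟩ := ENNReal.exists_inv_nat_lt hr.ne'
      exact ⟨n, le_trans (ENNReal.inv_le_inv.mpr le_self_add) hn.le⟩
    refine Filter.le_liminf_of_le (by isBoundedDefault) ?_
    filter_upwards [Filter.eventually_ge_atTop j] with k hk
    have hcov' : {x : ℝ | (x, y) ∈ V} ⊆ ⋃ n, {x : ℝ | (x, y) ∈ t k n} := by
      intro x hx
      rcases Set.mem_iUnion.1 (htcov k hx) with ⟨n, hn⟩
      exact Set.mem_iUnion.2 ⟨n, hn⟩
    have hdiam' : ∀ n, EMetric.diam {x : ℝ | (x, y) ∈ t k n} ≤ r := fun n =>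
      (aux_slice_diam (t k n) y).trans (((htdiam k n).trans (hδanti j k hk)).trans hj)
    refine le_trans (iInf_le_of_le (fun n => {x : ℝ | (x, y) ∈ t k n})
      (iInf_le_of_le hcov' (iInf_le _ hdiam'))) ?_
    -- compare the cover sum with `f k y`
    refine ENNReal.tsum_le_tsum fun n => ?_
    refine iSup_le fun hne => ?_
    obtain ⟨x, hx⟩ := hne
    have hyB : y ∈ B k n := hBmem k n x y hx
    have h1 : EMetric.diam {x : ℝ | (x, y) ∈ t k n} ^ (s - m)
        ≤ EMetric.diam (t k n) ^ (s - m) :=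
      ENNReal.rpow_le_rpow (aux_slice_diam (t k n) y) (by linarith)
    calc EMetric.diam {x : ℝ | (x, y) ∈ t k n} ^ (s - m)
        ≤ EMetric.diam (t k n) ^ (s - m) := h1
      _ = EMetric.diam (t k n) ^ (s - m) * (B k n).indicator 1 y := by
          rw [Set.indicator_of_mem hyB]; simp
  · -- integral bound
    have hint : ∀ k, ∫⁻ y, f k y ≤ μH[s] V + ε := by
      intro k
      have h1 : ∫⁻ y, f k y =
          ∑' n, EMetric.diam (t k n) ^ (s - m) * volume (B k n) := by
        calc ∫⁻ y, f k y
            = ∑' n, ∫⁻ y, EMetric.diam (t k n) ^ (s - m) * (B k n).indicator 1 y :=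
              lintegral_tsum fun n =>
                ((measurable_const.indicator (hBmeas k n)).const_mul _).aemeasurable
          _ = ∑' n, EMetric.diam (t k n) ^ (s - m) * volume (B k n) := by
              congr 1
              ext n
              have hterm : (fun y => EMetric.diam (t k n) ^ (s - (m : ℝ))
                  * (B k n).indicator 1 y)
                  = (B k n).indicator fun _ => EMetric.diam (t k n) ^ (s - (m : ℝ)) := by
                funext y
                by_cases h : y ∈ B k n <;> simp [h]
              rw [show (∫⁻ y, EMetric.diam (t k n) ^ (s - (m : ℝ))
                  * (B k n).indicator 1 y)
                  = ∫⁻ y, (B k n).indicator (fun _ => EMetric.diam (t k n) ^ (s - (m : ℝ))) y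
                  from by rw [← hterm], lintegral_indicator_const (hBmeas k n)]
      rw [h1]
      refine le_trans (ENNReal.tsum_le_tsum fun n => ?_) (htsum k)
      by_cases hne : (t k n).Nonempty
      · have hvol : volume (B k n) ≤ EMetric.diam (t k n) ^ (m : ℕ) := hBvol k n
        have hcalc : EMetric.diam (t k n) ^ (s - m) * EMetric.diam (t k n) ^ (m : ℕ)
            = EMetric.diam (t k n) ^ s := by
          rw [← ENNReal.rpow_natCast (EMetric.diam (t k n)) m,
            ← ENNReal.rpow_add_of_nonneg _ _ (by linarith) (Nat.cast_nonneg m)]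
          norm_num
        calc EMetric.diam (t k n) ^ (s - m) * volume (B k n)
            ≤ EMetric.diam (t k n) ^ (s - m) * EMetric.diam (t k n) ^ (m : ℕ) := by
              gcongr
          _ = EMetric.diam (t k n) ^ s := hcalc
          _ ≤ ⨆ _ : (t k n).Nonempty, EMetric.diam (t k n) ^ s :=
              le_iSup (fun _ : (t k n).Nonempty => EMetric.diam (t k n) ^ s) hne
      · rw [hBempty k n hne]
        simp
    calc ∫⁻ y, Filter.liminf (fun k => f k y) Filter.atTop
        ≤ Filter.liminf (fun k => ∫⁻ y, f k y) Filter.atTop :=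
          lintegral_liminf_le hfmeas
      _ ≤ Filter.liminf (fun _ : ℕ => μH[s] V + ε) Filter.atTop :=
          Filter.liminf_le_liminf (Filter.Eventually.of_forall hint)
      _ = μH[s] V + ε := Filter.liminf_const _

/-- Lemma 8.2 (lem:Hausdorff-product, Falconer): Fubini-type inequality for
Hausdorff measures of line slices.  For Borel `V ⊆ ℝⁿ = ℝ × ℝ^{n-1}` and
`n−1 ≤ s ≤ n` (here `n = m+1`),
`∫ H^{s-(n-1)}(V ∩ L_y) dy ≤ H^s(V)`; in particular if the slices have positive
`H^{s-(n-1)}`-measure for a positive measure set of `y`, then `dim_H V ≥ s`. -/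
theorem stmt_7 (m : ℕ) (s : ℝ) (hs1 : (m : ℝ) ≤ s) (hs2 : s ≤ (m : ℝ) + 1)
    (V : Set (ℝ × (Fin m → ℝ))) (hV : MeasurableSet V) :
    (∫⁻ y : Fin m → ℝ, μH[s - m] {x : ℝ | (x, y) ∈ V} ≤ μH[s] V) ∧
    (0 < volume {y : Fin m → ℝ | 0 < μH[s - m] {x : ℝ | (x, y) ∈ V}} →
      ENNReal.ofReal s ≤ dimH V) := by
  constructor
  · -- the Fubini-type inequality
    by_cases hfin : μH[s] V = ⊤
    · rw [hfin]; exact le_top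
    refine ENNReal.le_of_forall_pos_le_add fun ε hε _ => ?_
    obtain ⟨g, hgmeas, hgle, hgint⟩ := aux_key hs1 V ε (by exact_mod_cast hε.ne') hfin
    exact le_trans (lintegral_mono hgle) hgint
  · -- the dimension consequence
    intro hpos
    have hs0 : 0 ≤ s := le_trans (Nat.cast_nonneg m) hs1
    have hd : ENNReal.ofReal s = ((s.toNNReal : ℝ≥0) : ℝ≥0∞) := rfl
    rw [hd]
    refine @le_dimH_of_hausdorffMeasure_ne_zero (ℝ × (Fin m → ℝ)) _ _ _ V s.toNNReal ?_
    rw [Real.coe_toNNReal s hs0]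
    -- it suffices to show `μH[s] V ≠ 0`
    by_cases hfin : μH[s] V = ⊤
    · rw [hfin]; exact ENNReal.top_ne_zero
    intro h0
    -- find a level `c > 0` reached on a set of positive measure
    set F : (Fin m → ℝ) → ℝ≥0∞ := fun y => μH[s - m] {x : ℝ | (x, y) ∈ V} with hF
    have hsub : {y : Fin m → ℝ | 0 < F y} ⊆
        ⋃ n : ℕ, {y : Fin m → ℝ | ((n : ℝ≥0∞) + 1)⁻¹ ≤ F y} := by
      intro y hy
      obtain ⟨n, hn⟩ := ENNReal.exists_inv_nat_lt (hy.ne' : F y ≠ 0)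
      exact Set.mem_iUnion.2 ⟨n, le_trans (ENNReal.inv_le_inv.mpr le_self_add) hn.le⟩
    have hexn : ∃ n : ℕ, 0 < volume {y : Fin m → ℝ | ((n : ℝ≥0∞) + 1)⁻¹ ≤ F y} := by
      by_contra hno
      push_neg at hno
      simp only [nonpos_iff_eq_zero] at hno
      have : volume {y : Fin m → ℝ | 0 < F y} = 0 :=
        le_antisymm (le_trans (measure_mono hsub)
          (le_trans (measure_iUnion_le _) (by simp [hno]))) zero_le
      rw [this] at hpos; exact lt_irrefl _ hpos
    obtain ⟨n, hn⟩ := hexn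
    set c : ℝ≥0∞ := ((n : ℝ≥0∞) + 1)⁻¹ with hc
    have hc0 : 0 < c := by simp [hc]
    set A : Set (Fin m → ℝ) := {y | c ≤ F y} with hA
    have hcA : 0 < c * volume A := ENNReal.mul_pos hc0.ne' hn.ne'
    obtain ⟨ε, hε0, hεlt⟩ := exists_between hcA
    obtain ⟨g, hgmeas, hgle, hgint⟩ := aux_key hs1 V ε hε0.ne' hfin
    have h1 : c * volume A ≤ ∫⁻ y, g y := by
      have hAsub : A ⊆ {y | c ≤ g y} := fun y hy => le_trans hy (hgle y)
      calc c * volume A ≤ c * volume {y | c ≤ g y} :=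
            mul_le_mul_right (measure_mono hAsub) c
        _ ≤ ∫⁻ y, g y := mul_meas_ge_le_lintegral hgmeas c
    have h2 : ∫⁻ y, g y ≤ ε := by
      calc ∫⁻ y, g y ≤ μH[s] V + ε := hgint
        _ = ε := by rw [h0, zero_add]
    exact absurd (h1.trans h2) (not_le.mpr hεlt)
end

section
/- Let f : E × ℝⁿ → ℝⁿ (with E ⊆ ℝ a parameter interval, n = n_u + n_s + 2, coordinates (x, y, I, θ)) be C², and let a = (a_y, a_I, a_θ) ∈ ℝ₊³. Suppose z₁ − z₂ = (x, y, I, θ) satisfies ‖x‖ ≠ 0, ‖y‖ ≤ a_y‖x‖, ‖I‖ ≤ ε a_I‖x‖, ‖θ‖ ≤ a_θ‖x‖ with ε ≤ ε₀. Write m(A) = inf_{‖v‖=1}‖Av‖ for square matrices A, and let D_h denote uniform bounds over E × N for the partial derivatives of components of f. If the denominator d := m(∂f_x/∂x) − ‖∂f_x/∂y‖a_y − ε₀‖∂f_x/∂I‖a_I − ‖∂f_x/∂θ‖a_θ is positive, then ‖π_x(f(ε,z₁) − f(ε,z₂))‖ ≥ d·‖x‖. -/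
open Set ContinuousLinearMap

/-- Phase space `ℝ^{n_u} × ℝ^{n_s} × ℝ × ℝ` with coordinates `(x,y,I,θ)`. -/
abbrev Ph (nu ns : ℕ) := EuclideanSpace ℝ (Fin nu) × EuclideanSpace ℝ (Fin ns) × ℝ × ℝ

/-- Inclusion of the unstable coordinate `x ↦ (x,0,0,0)`. -/
noncomputable def inx (nu ns : ℕ) : EuclideanSpace ℝ (Fin nu) →L[ℝ] Ph nu ns :=
  ContinuousLinearMap.inl ℝ _ _

/-- Inclusion of the stable coordinate `y ↦ (0,y,0,0)`. -/
noncomputable def iny (nu ns : ℕ) : EuclideanSpace ℝ (Fin ns) →L[ℝ] Ph nu ns :=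
  (ContinuousLinearMap.inr ℝ _ _).comp (ContinuousLinearMap.inl ℝ _ (ℝ × ℝ))

/-- Inclusion of the action coordinate `I ↦ (0,0,I,0)`. -/
noncomputable def inI (nu ns : ℕ) : ℝ →L[ℝ] Ph nu ns :=
  (ContinuousLinearMap.inr ℝ _ _).comp ((ContinuousLinearMap.inr ℝ _ _).comp
    (ContinuousLinearMap.inl ℝ ℝ ℝ))

/-- Inclusion of the angle coordinate `θ ↦ (0,0,0,θ)`. -/
noncomputable def inθ (nu ns : ℕ) : ℝ →L[ℝ] Ph nu ns :=
  (ContinuousLinearMap.inr ℝ _ _).comp ((ContinuousLinearMap.inr ℝ _ _).comp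
    (ContinuousLinearMap.inr ℝ ℝ ℝ))

/-- Projection onto the unstable coordinate. -/
noncomputable def px (nu ns : ℕ) : Ph nu ns →L[ℝ] EuclideanSpace ℝ (Fin nu) :=
  ContinuousLinearMap.fst ℝ _ _

lemma ph_decomp_apply (nu ns : ℕ) (A : Ph nu ns →L[ℝ] Ph nu ns) (w : Ph nu ns) :
    (A w).1 = (A (inx nu ns w.1)).1 + (A (iny nu ns w.2.1)).1
      + (A (inI nu ns w.2.2.1)).1 + (A (inθ nu ns w.2.2.2)).1 := by
  have h : inx nu ns w.1 + iny nu ns w.2.1 + inI nu ns w.2.2.1 + inθ nu ns w.2.2.2 = w := by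
    simp [inx, iny, inI, inθ, Prod.ext_iff]
  conv_lhs => rw [← h]
  simp [map_add]

/-- Key expansion lower bound in the proof of Lemma 5.2 (th:param-dep-cones):
inside the cone (`‖y‖ ≤ a_y‖x‖`, `|I| ≤ εa_I‖x‖`, `|θ| ≤ a_θ‖x‖`, `x ≠ 0`),
if the interval-matrix bounds give a positive denominator
`d = m(∂f_x/∂x) − ‖∂f_x/∂y‖a_y − ε₀‖∂f_x/∂I‖a_I − ‖∂f_x/∂θ‖a_θ`, then
`‖π_x(f(ε,z₁) − f(ε,z₂))‖ ≥ d‖x‖`.  The set `Mxx` encodes the interval hull of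
the `∂f_x/∂x` blocks, with `m(A) ≥ mxx` for every `A` in it. -/
theorem stmt_18 (nu ns : ℕ) (ε₀ ay aI aθ : ℝ)
    (hε₀ : 0 ≤ ε₀) (hay : 0 < ay) (haI : 0 < aI) (haθ : 0 < aθ)
    (N : Set (Ph nu ns)) (hNconv : Convex ℝ N)
    (f : ℝ → Ph nu ns → Ph nu ns)
    (D : ℝ → Ph nu ns → (Ph nu ns →L[ℝ] Ph nu ns))
    (hD : ∀ ε ∈ Set.Icc 0 ε₀, ∀ z ∈ N, HasFDerivAt (f ε) (D ε z) z)
    (mxx bxy bxI bxθ : ℝ)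
    (Mxx : Set (EuclideanSpace ℝ (Fin nu) →L[ℝ] EuclideanSpace ℝ (Fin nu)))
    (hMconv : Convex ℝ Mxx) (hMclosed : IsClosed Mxx)
    (hMmem : ∀ ε ∈ Set.Icc 0 ε₀, ∀ z ∈ N,
      (px nu ns).comp ((D ε z).comp (inx nu ns)) ∈ Mxx)
    (hMlow : ∀ T ∈ Mxx, ∀ ξ, mxx * ‖ξ‖ ≤ ‖T ξ‖)
    (hbxy : ∀ ε ∈ Set.Icc 0 ε₀, ∀ z ∈ N,
      ‖(px nu ns).comp ((D ε z).comp (iny nu ns))‖ ≤ bxy)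
    (hbxI : ∀ ε ∈ Set.Icc 0 ε₀, ∀ z ∈ N,
      ‖(px nu ns).comp ((D ε z).comp (inI nu ns))‖ ≤ bxI)
    (hbxθ : ∀ ε ∈ Set.Icc 0 ε₀, ∀ z ∈ N,
      ‖(px nu ns).comp ((D ε z).comp (inθ nu ns))‖ ≤ bxθ)
    (d : ℝ) (hd : d = mxx - bxy * ay - ε₀ * bxI * aI - bxθ * aθ) (hdpos : 0 < d)
    (ε : ℝ) (hε : ε ∈ Set.Icc 0 ε₀) (z₁ z₂ : Ph nu ns)
    (hz₁ : z₁ ∈ N) (hz₂ : z₂ ∈ N)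
    (hx : (z₁ - z₂).1 ≠ 0)
    (hy : ‖(z₁ - z₂).2.1‖ ≤ ay * ‖(z₁ - z₂).1‖)
    (hI : |(z₁ - z₂).2.2.1| ≤ ε * aI * ‖(z₁ - z₂).1‖)
    (hθ : |(z₁ - z₂).2.2.2| ≤ aθ * ‖(z₁ - z₂).1‖) :
    d * ‖(z₁ - z₂).1‖ ≤ ‖(f ε z₁ - f ε z₂).1‖ := by
  set Δ := z₁ - z₂ with hΔ
  set X := EuclideanSpace ℝ (Fin nu)
  set B : ℝ := (bxy * ay + ε₀ * bxI * aI + bxθ * aθ) * ‖Δ.1‖ with hB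
  set zc : ℝ → Ph nu ns := fun s => z₂ + s • Δ with hzc
  have hmemN : ∀ s ∈ Set.Icc (0:ℝ) 1, zc s ∈ N := by
    intro s hs
    have h := hNconv hz₂ hz₁ (by linarith [hs.2] : (0:ℝ) ≤ 1 - s) hs.1 (by ring)
    have : zc s = (1 - s) • z₂ + s • z₁ := by simp only [hzc, hΔ]; module
    rw [this]; exact h
  have hbxy0 : 0 ≤ bxy := le_trans (norm_nonneg _) (hbxy ε hε z₁ hz₁)
  have hbxI0 : 0 ≤ bxI := le_trans (norm_nonneg _) (hbxI ε hε z₁ hz₁)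
  have hbxθ0 : 0 ≤ bxθ := le_trans (norm_nonneg _) (hbxθ ε hε z₁ hz₁)
  have hxnn : (0:ℝ) ≤ ‖Δ.1‖ := norm_nonneg _
  -- decomposition of Δ
  have hdecomp : Δ = inx nu ns Δ.1 + iny nu ns Δ.2.1 + inI nu ns Δ.2.2.1 + inθ nu ns Δ.2.2.2 := by
    simp [inx, iny, inI, inθ, Prod.ext_iff]
  -- the set of derivative values along the segment
  set S : Set X := (fun s => ((D ε (zc s)) Δ).1) '' Set.Icc (0:ℝ) 1 with hS
  set v : X := (f ε z₁ - f ε z₂).1 with hv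
  -- derivative of the composed curve
  have hder : ∀ s ∈ Set.Icc (0:ℝ) 1,
      HasDerivAt (fun t => f ε (zc t)) ((D ε (zc s)) Δ) s := by
    intro s hs
    have hline : HasDerivAt zc Δ s := by
      have h1 : HasDerivAt (fun t : ℝ => t • Δ) ((1:ℝ) • Δ) s :=
        (hasDerivAt_id s).smul_const Δ
      simpa [hzc] using h1.const_add z₂
    exact (hD ε hε (zc s) (hmemN s hs)).comp_hasDerivAt s hline
  -- MVT for any scalar functional
  have key : ∀ L : X →L[ℝ] ℝ, ∃ c ∈ Set.Ioo (0:ℝ) 1,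
      L (((D ε (zc c)) Δ).1) = L v := by
    intro L
    set φ : ℝ → ℝ := fun s => L ((f ε (zc s)).1) with hφ
    have hφder : ∀ s ∈ Set.Icc (0:ℝ) 1,
        HasDerivAt φ (L (((D ε (zc s)) Δ).1)) s := by
      intro s hs
      exact ((L.comp (px nu ns)).hasFDerivAt).comp_hasDerivAt s (hder s hs)
    have hcont : ContinuousOn φ (Set.Icc 0 1) := fun s hs =>
      (hφder s hs).continuousAt.continuousWithinAt
    obtain ⟨c, hc, hceq⟩ := exists_hasDerivAt_eq_slope φ
      (fun s => L (((D ε (zc s)) Δ).1)) one_pos hcont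
      (fun s hs => hφder s (Set.mem_Icc.2 ⟨le_of_lt hs.1, le_of_lt hs.2⟩))
    refine ⟨c, hc, ?_⟩
    rw [hceq]
    have h0 : zc (0:ℝ) = z₂ := by simp [hzc]
    have h1 : zc (1:ℝ) = z₁ := by simp [hzc, hΔ]
    have hsub : (f ε z₁ - f ε z₂).1 = (f ε z₁).1 - (f ε z₂).1 := rfl
    simp [hφ, h0, h1, hv, hsub, map_sub]
  -- v lies in the closed convex hull of S
  have hvmem : v ∈ closure (convexHull ℝ S) := by
    by_contra hvnot
    obtain ⟨L, u, hvu, hK⟩ := geometric_hahn_banach_point_closed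
      ((convex_convexHull ℝ S).closure) isClosed_closure hvnot
    obtain ⟨c, hc, hLc⟩ := key L
    have hmemS : ((D ε (zc c)) Δ).1 ∈ S :=
      ⟨c, Set.mem_Icc.2 ⟨le_of_lt hc.1, le_of_lt hc.2⟩, rfl⟩
    have := hK _ (subset_closure (subset_convexHull ℝ S hmemS))
    rw [hLc] at this
    linarith
  -- the convex set C
  set C : Set X := {w | ∃ T ∈ Mxx, ‖w - T Δ.1‖ ≤ B} with hC
  have hCconv : Convex ℝ C := by
    rintro w₁ ⟨T₁, hT₁, hw₁⟩ w₂ ⟨T₂, hT₂, hw₂⟩ a b ha hb hab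
    refine ⟨a • T₁ + b • T₂, hMconv hT₁ hT₂ ha hb hab, ?_⟩
    have : (a • w₁ + b • w₂) - (a • T₁ + b • T₂) Δ.1
        = a • (w₁ - T₁ Δ.1) + b • (w₂ - T₂ Δ.1) := by
      simp [ContinuousLinearMap.add_apply, ContinuousLinearMap.smul_apply]
      module
    rw [this]
    calc ‖a • (w₁ - T₁ Δ.1) + b • (w₂ - T₂ Δ.1)‖
        ≤ a * ‖w₁ - T₁ Δ.1‖ + b * ‖w₂ - T₂ Δ.1‖ := by
          refine (norm_add_le _ _).trans ?_
          rw [norm_smul, norm_smul, Real.norm_eq_abs, Real.norm_eq_abs,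
            abs_of_nonneg ha, abs_of_nonneg hb]
      _ ≤ a * B + b * B :=
          add_le_add (mul_le_mul_of_nonneg_left hw₁ ha) (mul_le_mul_of_nonneg_left hw₂ hb)
      _ = B := by rw [← add_mul, hab, one_mul]
  -- S ⊆ C
  have hSC : S ⊆ C := by
    rintro w ⟨s, hs, rfl⟩
    have hzs := hmemN s hs
    refine ⟨(px nu ns).comp ((D ε (zc s)).comp (inx nu ns)), hMmem ε hε _ hzs, ?_⟩
    have hrw : ((D ε (zc s)) Δ).1 - ((px nu ns).comp ((D ε (zc s)).comp (inx nu ns))) Δ.1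
        = ((px nu ns).comp ((D ε (zc s)).comp (iny nu ns))) Δ.2.1
          + ((px nu ns).comp ((D ε (zc s)).comp (inI nu ns))) Δ.2.2.1
          + ((px nu ns).comp ((D ε (zc s)).comp (inθ nu ns))) Δ.2.2.2 := by
      simp only [ContinuousLinearMap.comp_apply, px, ContinuousLinearMap.coe_fst']
      rw [ph_decomp_apply nu ns (D ε (zc s)) Δ]
      abel
    rw [hrw]
    have e1 : ‖((px nu ns).comp ((D ε (zc s)).comp (iny nu ns))) Δ.2.1‖ ≤ bxy * (ay * ‖Δ.1‖) :=
      le_trans (ContinuousLinearMap.le_opNorm _ _)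
        (mul_le_mul (hbxy ε hε _ hzs) hy (norm_nonneg _) hbxy0)
    have e2 : ‖((px nu ns).comp ((D ε (zc s)).comp (inI nu ns))) Δ.2.2.1‖
        ≤ bxI * (ε₀ * aI * ‖Δ.1‖) := by
      refine le_trans (ContinuousLinearMap.le_opNorm _ _) ?_
      have : ‖Δ.2.2.1‖ ≤ ε₀ * aI * ‖Δ.1‖ := by
        rw [Real.norm_eq_abs]
        refine hI.trans ?_
        have : ε * aI * ‖Δ.1‖ ≤ ε₀ * aI * ‖Δ.1‖ := by
          have := hε.2
          nlinarith [mul_nonneg haI.le hxnn]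
        exact this
      exact mul_le_mul (hbxI ε hε _ hzs) this (norm_nonneg _) hbxI0
    have e3 : ‖((px nu ns).comp ((D ε (zc s)).comp (inθ nu ns))) Δ.2.2.2‖
        ≤ bxθ * (aθ * ‖Δ.1‖) := by
      refine le_trans (ContinuousLinearMap.le_opNorm _ _) ?_
      rw [Real.norm_eq_abs]
      exact mul_le_mul (hbxθ ε hε _ hzs) hθ (abs_nonneg _) hbxθ0
    calc ‖_ + _ + _‖ ≤ ‖_ + _‖ + ‖_‖ := norm_add_le _ _
      _ ≤ ‖_‖ + ‖_‖ + ‖_‖ := by gcongr; exact norm_add_le _ _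
      _ ≤ bxy * (ay * ‖Δ.1‖) + bxI * (ε₀ * aI * ‖Δ.1‖) + bxθ * (aθ * ‖Δ.1‖) := by
          gcongr
      _ = B := by rw [hB]; ring
  -- every element of C has norm ≥ d‖x‖, and this passes to the closure
  have hClow : C ⊆ {w : X | d * ‖Δ.1‖ ≤ ‖w‖} := by
    rintro w ⟨T, hT, hw⟩
    simp only [Set.mem_setOf_eq]
    have h1 : mxx * ‖Δ.1‖ ≤ ‖T Δ.1‖ := hMlow T hT Δ.1
    have h2 : ‖T Δ.1‖ - ‖w - T Δ.1‖ ≤ ‖w‖ := by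
      have h4 := norm_sub_norm_le (T Δ.1) w
      rw [show ‖w - T Δ.1‖ = ‖T Δ.1 - w‖ from norm_sub_rev _ _]
      linarith
    have : d * ‖Δ.1‖ = mxx * ‖Δ.1‖ - B := by rw [hd, hB]; ring
    rw [this]
    linarith
  have hclosed : IsClosed {w : X | d * ‖Δ.1‖ ≤ ‖w‖} :=
    isClosed_le continuous_const continuous_norm
  have hfinal : closure (convexHull ℝ S) ⊆ {w : X | d * ‖Δ.1‖ ≤ ‖w‖} := by
    refine closure_minimal ?_ hclosed
    exact (convexHull_min hSC hCconv).trans hClow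
  exact hfinal hvmem
end
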